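/- For every ordinal α ≥ ω₁, the space 𝒳_α of all finite graphs of strictly decreasing partial functions from α to α, topologized as a subspace of {0,1}^(α×α) via characteristic functions, is not bisequential; indeed 𝒳 = 𝒳_{ω₁} embeds homeomorphically into 𝒳_α. -/

import Mathlib

open Cardinal Filter Topology Set

noncomputable section
open Classical

/-- `ω₁`, the first uncountable ordinal, viewed as the linearly ordered type of
all countable ordinals. -/
abbrev Omega1 : Type 1 := ↥(Set.Iio (Cardinal.aleph 1).ord)

/-- The vertical section `A_α = {β : (α, β) ∈ A}`. -/
def vertSection (A : Set (Omega1 × Omega1)) (α : Omega1) : Set Omega1 :=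
  {β | (α, β) ∈ A}

/-- The horizontal section `A^α = {γ : (γ, α) ∈ A}`. -/
def horSection (A : Set (Omega1 × Omega1)) (α : Omega1) : Set Omega1 :=
  {γ | (γ, α) ∈ A}

/-- Membership in the σ-ideal `𝓘`: for all but countably many `α ∈ ω₁` both the
vertical and the horizontal section of `A` at `α` are countable. -/
def MemIdealI (A : Set (Omega1 × Omega1)) : Prop :=
  {α : Omega1 | ¬ ((vertSection A α).Countable ∧ (horSection A α).Countable)}.Countable

/-- `F` is a finite graph of a strictly decreasing partial function: `F` is finite,
contains no two pairs with the same first coordinate, and whenever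
`(α,β), (α',β') ∈ F` with `α < α'` then `β > β'`. -/
def IsDecGraph {T : Type*} [LinearOrder T] (F : Set (T × T)) : Prop :=
  F.Finite ∧ (∀ p ∈ F, ∀ q ∈ F, p.1 = q.1 → p = q) ∧
    (∀ p ∈ F, ∀ q ∈ F, p.1 < q.1 → q.2 < p.2)

/-- The characteristic function of a set, with values in `{0,1} = Bool`. -/
def chi {T : Type*} (A : Set T) : T → Bool := fun x => if x ∈ A then true else false

/-- The space `𝒳` (over a linear order `T`) of characteristic functions of finite
graphs of strictly decreasing partial functions on `T`, viewed as a subset of the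
product space `{0,1}^(T × T)`; it carries the subspace topology. -/
def XSpace (T : Type*) [LinearOrder T] : Set ((T × T) → Bool) :=
  {f | ∃ F : Set (T × T), IsDecGraph F ∧ f = chi F}

/-- The space `𝒳_B = {A ∈ 𝒳 : A ⊆ B}`, as a subset of `{0,1}^(ω₁ × ω₁)`. -/
def XSpaceIn (B : Set (Omega1 × Omega1)) : Set ((Omega1 × Omega1) → Bool) :=
  {f | ∃ F : Set (Omega1 × Omega1), IsDecGraph F ∧ F ⊆ B ∧ f = chi F}

/-- The support of a point of `{0,1}^T`: the set of which it is the
characteristic function. -/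
def supp {T : Type*} (f : T → Bool) : Set T := {x | f x = true}

/-- A topological space `X` is bisequential if for every ultrafilter `𝒰` on `X`
converging to a point `x` (every neighbourhood of `x` belongs to `𝒰`) there is a
decreasing sequence `U₀ ⊇ U₁ ⊇ ⋯` of members of `𝒰` converging to `x` (every
neighbourhood of `x` contains `Uₙ` for all sufficiently large `n`). -/
def Bisequential (X : Type*) [TopologicalSpace X] : Prop :=
  ∀ (𝒰 : Ultrafilter X) (x : X), (𝒰 : Filter X) ≤ 𝓝 x →
    ∃ U : ℕ → Set X, (∀ n, U n ∈ 𝒰) ∧ (∀ n, U (n + 1) ⊆ U n) ∧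
      ∀ V ∈ 𝓝 x, ∀ᶠ n in atTop, U n ⊆ V

instance : Nonempty Omega1 :=
  ⟨⟨0, (Cardinal.isSuccLimit_ord (Cardinal.aleph0_le_aleph 1)).pos⟩⟩

lemma countable_Iic (σ : Omega1) : (Set.Iic σ).Countable := by
  have hlim := Cardinal.isSuccLimit_ord (Cardinal.aleph0_le_aleph 1)
  have hlt : Order.succ σ.1 < (Cardinal.aleph 1).ord := hlim.succ_lt σ.2
  have hcnt : Countable ↥(Set.Iio (Order.succ σ.1)) := by
    rw [← Cardinal.mk_le_aleph0_iff, Ordinal.mk_Iio_ordinal]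
    have h2 : (Order.succ σ.1).card < Cardinal.aleph 1 := Cardinal.lt_ord.1 hlt
    have h3 : (Order.succ σ.1).card ≤ ℵ₀ := by
      exact Order.lt_succ_iff.1 (lt_of_lt_of_eq h2 Cardinal.succ_aleph0.symm)
    calc Cardinal.lift.{1} (Order.succ σ.1).card ≤ Cardinal.lift.{1} ℵ₀ :=
          Cardinal.lift_le.2 h3
      _ = ℵ₀ := Cardinal.lift_aleph0
  rw [← Set.countable_coe_iff]
  have hinj : Function.Injective
      (fun x : ↥(Set.Iic σ) => (⟨x.1.1, lt_of_le_of_lt (Subtype.coe_le_coe.2 x.2)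
        (Order.lt_succ_of_not_isMax (not_isMax σ.1)) ⟩ : ↥(Set.Iio (Order.succ σ.1)))) := by
    intro x y h
    simp only [Subtype.mk.injEq] at h
    have h' : x.1.1 = y.1.1 := Subtype.mk.inj h
    exact Subtype.ext (Subtype.ext h')
  exact hinj.countable

lemma univ_uncountable : ¬ (Set.univ : Set Omega1).Countable := by
  intro h
  have hc : Countable Omega1 := Set.countable_univ_iff.mp h
  have h1 : #Omega1 ≤ ℵ₀ := Cardinal.mk_le_aleph0_iff.2 hc
  rw [Ordinal.mk_Iio_ordinal, Cardinal.card_ord] at h1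
  rw [← Cardinal.lift_aleph0.{1,0}, Cardinal.lift_le] at h1
  exact absurd h1 (not_le.2 Cardinal.aleph0_lt_aleph_one)

lemma uncountable_exists_gt {A : Set Omega1} (hA : ¬ A.Countable) (σ : Omega1) :
    ∃ a ∈ A, σ < a := by
  by_contra h
  push_neg at h
  exact hA ((countable_Iic σ).mono fun a ha => not_lt.1 fun hlt => absurd hlt (not_lt.2 (h a ha)))

lemma exists_bound {F : Set (Omega1 × Omega1)} (hF : F.Finite) :
    ∃ M : Omega1, ∀ p ∈ F, p.1 ≤ M ∧ p.2 ≤ M := by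
  have h1 : (Prod.fst '' F ∪ Prod.snd '' F).Finite := (hF.image _).union (hF.image _)
  obtain ⟨M, hM⟩ := h1.bddAbove
  exact ⟨M, fun p hp => ⟨hM (Or.inl ⟨p, hp, rfl⟩), hM (Or.inr ⟨p, hp, rfl⟩)⟩⟩


lemma isDecGraph_empty {T : Type*} [LinearOrder T] : IsDecGraph (∅ : Set (T × T)) :=
  ⟨Set.finite_empty, by simp, by simp⟩

lemma IsDecGraph.insert_left {F : Set (Omega1 × Omega1)} (h : IsDecGraph F) {a b : Omega1}
    (hfst : ∀ p ∈ F, a < p.1) (hsnd : ∀ p ∈ F, p.2 < b) :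
    IsDecGraph (insert (a, b) F) := by
  refine ⟨h.1.insert _, ?_, ?_⟩
  · rintro p (rfl | hp) q (rfl | hq) heq
    · rfl
    · exact absurd heq (ne_of_lt (hfst q hq))
    · exact absurd heq.symm (ne_of_lt (hfst p hp))
    · exact h.2.1 p hp q hq heq
  · rintro p (rfl | hp) q (rfl | hq) hlt
    · exact absurd hlt (lt_irrefl _)
    · exact hsnd q hq
    · exact absurd hlt (not_lt.2 (le_of_lt (hfst p hp)))
    · exact h.2.2 p hp q hq hlt

lemma IsDecGraph.insert_right {F : Set (Omega1 × Omega1)} (h : IsDecGraph F) {x γ : Omega1}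
    (hfst : ∀ p ∈ F, p.1 < x) (hsnd : ∀ p ∈ F, γ < p.2) :
    IsDecGraph (insert (x, γ) F) := by
  refine ⟨h.1.insert _, ?_, ?_⟩
  · rintro p (rfl | hp) q (rfl | hq) heq
    · rfl
    · exact absurd heq.symm (ne_of_lt (hfst q hq))
    · exact absurd heq (ne_of_lt (hfst p hp))
    · exact h.2.1 p hp q hq heq
  · rintro p (rfl | hp) q (rfl | hq) hlt
    · exact absurd hlt (lt_irrefl _)
    · exact absurd hlt (not_lt.2 (le_of_lt (hfst q hq)))
    · exact hsnd p hp
    · exact h.2.2 p hp q hq hlt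

lemma master (l : List (Set (Omega1 × Omega1))) (hl : ∀ B ∈ l, ¬ MemIdealI B) (σ : Omega1) :
    ∃ F : Set (Omega1 × Omega1), IsDecGraph F ∧ (∀ p ∈ F, σ < p.1 ∧ σ < p.2) ∧
      ∀ B ∈ l, ∃ p ∈ F, p ∈ B := by
  induction l generalizing σ with
  | nil => exact ⟨∅, isDecGraph_empty, by simp, by simp⟩
  | cons B l ih =>
    have hB : ¬ MemIdealI B := hl B (List.mem_cons_self)
    have hl' : ∀ B' ∈ l, ¬ MemIdealI B' := fun B' h => hl B' (List.mem_cons_of_mem _ h)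
    have hsplit : ¬ ({α : Omega1 | ¬ (vertSection B α).Countable}.Countable) ∨
        ¬ ({α : Omega1 | ¬ (horSection B α).Countable}.Countable) := by
      by_contra hcon
      push_neg at hcon
      apply hB
      refine Set.Countable.mono ?_ (hcon.1.union hcon.2)
      intro α hα
      rcases not_and_or.1 hα with h1 | h1
      · exact Or.inl h1
      · exact Or.inr h1
    rcases hsplit with hv | hh
    · obtain ⟨a, ha, haσ⟩ := uncountable_exists_gt hv σ
      obtain ⟨F', hF', hcoord, hhit⟩ := ih hl' a
      obtain ⟨M, hM⟩ := exists_bound hF'.1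
      obtain ⟨b, hb, hbM⟩ := uncountable_exists_gt ha (max M σ)
      refine ⟨insert (a, b) F', ?_, ?_, ?_⟩
      · exact hF'.insert_left (fun p hp => (hcoord p hp).1)
          (fun p hp => lt_of_le_of_lt ((hM p hp).2) (lt_of_le_of_lt (le_max_left M σ) hbM))
      · rintro p (rfl | hp)
        · exact ⟨haσ, lt_of_le_of_lt (le_max_right M σ) hbM⟩
        · exact ⟨lt_trans haσ (hcoord p hp).1, lt_trans haσ (hcoord p hp).2⟩
      · intro B' hB'mem
        rcases List.mem_cons.1 hB'mem with rfl | hB'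
        · exact ⟨(a, b), Set.mem_insert _ _, hb⟩
        · obtain ⟨p, hpF, hpB⟩ := hhit B' hB'
          exact ⟨p, Set.mem_insert_of_mem _ hpF, hpB⟩
    · obtain ⟨γ, hγ, hγσ⟩ := uncountable_exists_gt hh σ
      obtain ⟨F', hF', hcoord, hhit⟩ := ih hl' γ
      obtain ⟨M, hM⟩ := exists_bound hF'.1
      obtain ⟨x, hx, hxM⟩ := uncountable_exists_gt hγ (max M σ)
      refine ⟨insert (x, γ) F', ?_, ?_, ?_⟩
      · exact hF'.insert_right
          (fun p hp => lt_of_le_of_lt ((hM p hp).1) (lt_of_le_of_lt (le_max_left M σ) hxM))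
          (fun p hp => (hcoord p hp).2)
      · rintro p (rfl | hp)
        · exact ⟨lt_of_le_of_lt (le_max_right M σ) hxM, hγσ⟩
        · exact ⟨lt_trans hγσ (hcoord p hp).1, lt_trans hγσ (hcoord p hp).2⟩
      · intro B' hB'mem
        rcases List.mem_cons.1 hB'mem with rfl | hB'
        · exact ⟨(x, γ), Set.mem_insert _ _, hx⟩
        · obtain ⟨p, hpF, hpB⟩ := hhit B' hB'
          exact ⟨p, Set.mem_insert_of_mem _ hpF, hpB⟩

lemma memIdealI_iUnion {P : ℕ → Set (Omega1 × Omega1)} (h : ∀ n, MemIdealI (P n)) :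
    MemIdealI (⋃ n, P n) := by
  refine Set.Countable.mono ?_ (Set.countable_iUnion fun n => h n)
  intro α hα
  by_contra hn
  simp only [Set.mem_iUnion, Set.mem_setOf_eq, not_exists, not_not] at hn
  apply hα
  constructor
  · have : vertSection (⋃ n, P n) α = ⋃ n, vertSection (P n) α := by
      ext β; simp [vertSection, Set.mem_iUnion]
    rw [this]
    exact Set.countable_iUnion fun n => (hn n).1
  · have : horSection (⋃ n, P n) α = ⋃ n, horSection (P n) α := by
      ext β; simp [horSection, Set.mem_iUnion]
    rw [this]
    exact Set.countable_iUnion fun n => (hn n).2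

lemma not_memIdealI_univ : ¬ MemIdealI (Set.univ : Set (Omega1 × Omega1)) := by
  intro h
  apply univ_uncountable
  refine Set.Countable.mono ?_ h
  intro α _
  simp only [Set.mem_setOf_eq]
  intro hcon
  apply univ_uncountable
  have : vertSection (Set.univ : Set (Omega1 × Omega1)) α = Set.univ := by
    ext β; simp [vertSection]
  rw [this] at hcon
  exact hcon.1

abbrev XO := ↥(XSpace Omega1)

def NN (S : Set (Omega1 × Omega1)) : Set XO := {x | ∀ p ∈ S, (x : (Omega1 × Omega1) → Bool) p = false}

def HH (B : Set (Omega1 × Omega1)) : Set XO := {x | ∃ p ∈ B, (x : (Omega1 × Omega1) → Bool) p = true}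

def GG : Set (Set XO) :=
  {A | (∃ S : Set (Omega1 × Omega1), S.Finite ∧ A = NN S) ∨
       (∃ B : Set (Omega1 × Omega1), ¬ MemIdealI B ∧ A = HH B)}

lemma chi_mem_XSpace {F : Set (Omega1 × Omega1)} (hF : IsDecGraph F) : chi F ∈ XSpace Omega1 :=
  ⟨F, hF, rfl⟩

lemma GG_fip : ∀ t ⊆ GG, t.Finite → (⋂₀ t).Nonempty := by
  have key : ∀ t : Set (Set XO), t.Finite → t ⊆ GG →
      ∃ S : Set (Omega1 × Omega1), S.Finite ∧ ∃ lB : List (Set (Omega1 × Omega1)),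
      (∀ B ∈ lB, ¬ MemIdealI B) ∧
      (NN S ∩ {x : XO | ∀ B ∈ lB, ∃ p ∈ B, (x : (Omega1 × Omega1) → Bool) p = true}) ⊆ ⋂₀ t := by
    intro t hfin
    induction t, hfin using Set.Finite.induction_on with
    | empty =>
        intro _
        refine ⟨∅, Set.finite_empty, [], by simp, ?_⟩
        rw [Set.sInter_empty]
        exact Set.subset_univ _
    | @insert A t' hA ht' iht =>
        intro hsub
        have hAG : A ∈ GG := hsub (Set.mem_insert _ _)
        obtain ⟨S, hS, lB, hlB, hincl⟩ := iht (fun u hu => hsub (Set.mem_insert_of_mem _ hu))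
        rw [Set.sInter_insert]
        rcases hAG with ⟨S', hS', rfl⟩ | ⟨B, hB, rfl⟩
        · refine ⟨S ∪ S', hS.union hS', lB, hlB, ?_⟩
          rintro x ⟨hx1, hx2⟩
          have hxS : x ∈ NN S := fun p hp => hx1 p (Or.inl hp)
          have hxS' : x ∈ NN S' := fun p hp => hx1 p (Or.inr hp)
          exact ⟨hxS', hincl ⟨hxS, hx2⟩⟩
        · refine ⟨S, hS, B :: lB, ?_, ?_⟩
          · intro B' hB'
            rcases List.mem_cons.1 hB' with rfl | h
            · exact hB
            · exact hlB B' h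
          · rintro x ⟨hx1, hx2⟩
            refine ⟨hx2 B (List.mem_cons_self), hincl ⟨hx1, fun B' h => hx2 B' (List.mem_cons_of_mem _ h)⟩⟩
  intro t hsub hfin
  obtain ⟨S, hS, lB, hlB, hincl⟩ := key t hfin hsub
  obtain ⟨M, hM⟩ := exists_bound hS
  obtain ⟨F, hF, hcoord, hhit⟩ := master lB hlB M
  refine ⟨⟨chi F, chi_mem_XSpace hF⟩, hincl ⟨?_, ?_⟩⟩
  · intro p hp
    have hpF : p ∉ F := by
      intro hmem
      exact absurd (hM p hp).1 (not_le.2 (hcoord p hmem).1)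
    simp [chi, hpF]
  · intro B hB
    obtain ⟨p, hpF, hpB⟩ := hhit B hB
    exact ⟨p, hpB, by simp [chi, hpF]⟩

lemma not_bisequential_XO : ¬ Bisequential XO := by
  intro hbis
  have h0 : chi (∅ : Set (Omega1 × Omega1)) ∈ XSpace Omega1 := chi_mem_XSpace isDecGraph_empty
  set x₀ : XO := ⟨chi ∅, h0⟩ with hx₀def
  have hx₀val : ∀ p, (x₀ : (Omega1 × Omega1) → Bool) p = false := by
    intro p; simp [hx₀def, chi]
  have hne : (Filter.generate GG).NeBot :=
    Filter.generate_neBot_iff.2 (fun t ht hfin => GG_fip t ht hfin)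
  set 𝒰 : Ultrafilter XO := @Ultrafilter.of _ (Filter.generate GG) hne with h𝒰def
  have hmemGG : ∀ A ∈ GG, A ∈ 𝒰 := by
    intro A hA
    exact Filter.le_def.1 (@Ultrafilter.of_le _ (Filter.generate GG) hne) A (Filter.mem_generate_of_mem hA)
  have hconv : (𝒰 : Filter XO) ≤ 𝓝 x₀ := by
    intro V hV
    obtain ⟨O, hOV, hOopen, hxO⟩ := mem_nhds_iff.1 hV
    obtain ⟨O', hO'open, hO'pre⟩ := isOpen_induced_iff.1 hOopen
    have hx₀O' : (x₀ : (Omega1 × Omega1) → Bool) ∈ O' := by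
      rw [← hO'pre] at hxO; exact hxO
    obtain ⟨I, u, hu, hpi⟩ := isOpen_pi_iff.1 hO'open _ hx₀O'
    have hNN : NN ↑I ∈ 𝒰 := hmemGG _ (Or.inl ⟨↑I, I.finite_toSet, rfl⟩)
    refine Filter.mem_of_superset hNN ?_
    intro x hx
    apply hOV
    rw [← hO'pre]
    apply hpi
    intro i hi
    have hfalse : (x : (Omega1 × Omega1) → Bool) i = false := hx i hi
    rw [hfalse]
    have h2 := (hu i hi).2
    rwa [hx₀val i] at h2
  obtain ⟨U, hU, _, hUconv⟩ := hbis 𝒰 x₀ hconv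
  set P : ℕ → Set (Omega1 × Omega1) :=
    fun n => {p | ∀ x ∈ U n, (x : (Omega1 × Omega1) → Bool) p = false} with hPdef
  have hPideal : ∀ n, MemIdealI (P n) := by
    intro n
    by_contra hpos
    have hHH : HH (P n) ∈ 𝒰 := hmemGG _ (Or.inr ⟨P n, hpos, rfl⟩)
    have hint : (U n ∩ HH (P n)).Nonempty := Filter.nonempty_of_mem (Filter.inter_mem (hU n) hHH)
    obtain ⟨x, hxU, p, hpP, hxp⟩ := hint
    have := hpP x hxU
    simp [this] at hxp
  have hcover : ∀ p : Omega1 × Omega1, ∃ n, p ∈ P n := by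
    intro p
    have hc : Continuous fun x : XO => (x : (Omega1 × Omega1) → Bool) p :=
      (continuous_apply p).comp continuous_subtype_val
    have hopen : IsOpen {x : XO | (x : (Omega1 × Omega1) → Bool) p = false} :=
      (isOpen_discrete ({false} : Set Bool)).preimage hc
    have hmem : {x : XO | (x : (Omega1 × Omega1) → Bool) p = false} ∈ 𝓝 x₀ :=
      hopen.mem_nhds (hx₀val p)
    obtain ⟨n, hn⟩ := (hUconv _ hmem).exists
    exact ⟨n, fun x hx => hn hx⟩
  have huniv : (Set.univ : Set (Omega1 × Omega1)) = ⋃ n, P n := by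
    ext p
    simp only [Set.mem_univ, true_iff, Set.mem_iUnion]
    exact hcover p
  exact not_memIdealI_univ (huniv ▸ memIdealI_iUnion hPideal)

lemma bisequential_of_embedding {Y Z : Type*} [TopologicalSpace Y] [TopologicalSpace Z]
    {e : Y → Z} (he : IsEmbedding e) (h : Bisequential Z) : Bisequential Y := by
  intro 𝒰 y hconv
  have htend : (Ultrafilter.map e 𝒰 : Filter Z) ≤ 𝓝 (e y) := by
    rw [Ultrafilter.coe_map]
    calc Filter.map e (𝒰 : Filter Y) ≤ Filter.map e (𝓝 y) := Filter.map_mono hconv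
      _ ≤ 𝓝 (e y) := he.continuous.continuousAt
  obtain ⟨V, hV, hVdec, hVconv⟩ := h (Ultrafilter.map e 𝒰) (e y) htend
  refine ⟨fun n => e ⁻¹' V n, fun n => Ultrafilter.mem_map.1 ? _, fun n => Set.preimage_mono (hVdec n), ?_⟩
  · exact hV n
  · intro W hW
    rw [he.isInducing.nhds_eq_comap, Filter.mem_comap] at hW
    obtain ⟨W', hW', hsub⟩ := hW
    exact (hVconv W' hW').mono fun n hn => subset_trans (Set.preimage_mono hn) hsub

section EmbeddingPart

variable (α : Ordinal.{0})

def emap : ((Omega1 × Omega1) → Bool) → ((↥(Set.Iio α) × ↥(Set.Iio α)) → Bool) :=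
  fun f q =>
    if h : q.1.1 < (Cardinal.aleph 1).ord ∧ q.2.1 < (Cardinal.aleph 1).ord then
      f (⟨q.1.1, h.1⟩, ⟨q.2.1, h.2⟩)
    else false

def iotaO (hα : (Cardinal.aleph 1).ord ≤ α) : Omega1 → ↥(Set.Iio α) := fun a => ⟨a.1, lt_of_lt_of_le a.2 hα⟩

def rmap (hα : (Cardinal.aleph 1).ord ≤ α) : ((↥(Set.Iio α) × ↥(Set.Iio α)) → Bool) → ((Omega1 × Omega1) → Bool) :=
  fun g p => g (iotaO α hα p.1, iotaO α hα p.2)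

lemma rmap_emap (hα : (Cardinal.aleph 1).ord ≤ α) : Function.LeftInverse (rmap α hα) (emap α) := by
  intro f
  funext p
  have hc : (iotaO α hα p.1).1 < (Cardinal.aleph 1).ord ∧
      (iotaO α hα p.2).1 < (Cardinal.aleph 1).ord := ⟨p.1.2, p.2.2⟩
  show emap α f (iotaO α hα p.1, iotaO α hα p.2) = f p
  rw [emap, dif_pos hc]
  congr 1

lemma continuous_emap : Continuous (emap α) := by
  apply continuous_pi
  intro q
  by_cases h : q.1.1 < (Cardinal.aleph 1).ord ∧ q.2.1 < (Cardinal.aleph 1).ord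
  · simp only [emap, dif_pos h]
    exact continuous_apply _
  · simp only [emap, dif_neg h]
    exact continuous_const

lemma continuous_rmap (hα : (Cardinal.aleph 1).ord ≤ α) : Continuous (rmap α hα) := by
  apply continuous_pi
  intro p
  exact continuous_apply _

lemma isEmbedding_emap (hα : (Cardinal.aleph 1).ord ≤ α) : IsEmbedding (emap α) :=
  Function.LeftInverse.isEmbedding (rmap_emap α hα) (continuous_rmap α hα) (continuous_emap α)

lemma emap_mem_XSpace (hα : (Cardinal.aleph 1).ord ≤ α) {f : (Omega1 × Omega1) → Bool} (hf : f ∈ XSpace Omega1) :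
    emap α f ∈ XSpace ↥(Set.Iio α) := by
  obtain ⟨F, hF, rfl⟩ := hf
  refine ⟨(fun p : Omega1 × Omega1 => (iotaO α hα p.1, iotaO α hα p.2)) '' F, ?_, ?_⟩
  · refine ⟨hF.1.image _, ?_, ?_⟩
    · rintro p' ⟨p, hp, rfl⟩ q' ⟨q, hq, rfl⟩ heq
      have heq' : (iotaO α hα p.1).1 = (iotaO α hα q.1).1 := by
        exact congrArg Subtype.val heq
      have h1 : p.1 = q.1 := Subtype.ext heq'
      rw [hF.2.1 p hp q hq h1]
    · rintro p' ⟨p, hp, rfl⟩ q' ⟨q, hq, rfl⟩ hlt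
      have hlt' : (iotaO α hα p.1).1 < (iotaO α hα q.1).1 := hlt
      have h1 : p.1 < q.1 := hlt'
      have h2 := hF.2.2 p hp q hq h1
      exact h2
  · funext q
    by_cases h : q.1.1 < (Cardinal.aleph 1).ord ∧ q.2.1 < (Cardinal.aleph 1).ord
    · rw [emap, dif_pos h]
      have hiff : (⟨q.1.1, h.1⟩, (⟨q.2.1, h.2⟩ : Omega1)) ∈ F ↔
          q ∈ (fun p : Omega1 × Omega1 => (iotaO α hα p.1, iotaO α hα p.2)) '' F := by
        constructor
        · intro hm
          refine ⟨(⟨q.1.1, h.1⟩, ⟨q.2.1, h.2⟩), hm, ?_⟩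
          show (iotaO α hα ⟨q.1.1, h.1⟩, iotaO α hα ⟨q.2.1, h.2⟩) = q
          have e1 : iotaO α hα ⟨q.1.1, h.1⟩ = q.1 := Subtype.ext rfl
          have e2 : iotaO α hα ⟨q.2.1, h.2⟩ = q.2 := Subtype.ext rfl
          rw [e1, e2]
        · rintro ⟨p, hp, rfl⟩
          have h1 : p.1 = ⟨(iotaO α hα p.1).1, p.1.2⟩ := Subtype.ext rfl
          convert hp using 2
          all_goals exact Subtype.ext rfl
      simp only [chi]
      split_ifs with h1 h2 h2
      · rfl
      · exact absurd (hiff.1 h1) h2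
      · exact absurd (hiff.2 h2) h1
      · rfl
    · rw [emap, dif_neg h]
      have hnot : q ∉ (fun p : Omega1 × Omega1 => (iotaO α hα p.1, iotaO α hα p.2)) '' F := by
        rintro ⟨p, hp, rfl⟩
        exact h ⟨p.1.2, p.2.2⟩
      simp [chi, hnot]

def embXO (hα : (Cardinal.aleph 1).ord ≤ α) : XO → ↥(XSpace ↥(Set.Iio α)) :=
  fun x => ⟨emap α x.1, emap_mem_XSpace α hα x.2⟩

lemma isEmbedding_embXO (hα : (Cardinal.aleph 1).ord ≤ α) : IsEmbedding (embXO α hα) := by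
  have h1 : IsEmbedding ((emap α) ∘ (Subtype.val : XO → (Omega1 × Omega1) → Bool)) :=
    (isEmbedding_emap α hα).comp IsEmbedding.subtypeVal
  have h2 : IsEmbedding
      (Set.codRestrict ((emap α) ∘ (Subtype.val : XO → (Omega1 × Omega1) → Bool))
        (XSpace ↥(Set.Iio α)) (fun x => emap_mem_XSpace α hα x.2)) :=
    h1.codRestrict _ _
  exact h2

end EmbeddingPart

/-- For every ordinal `α ≥ ω₁`, the space `𝒳_α` of finite graphs of strictly
decreasing partial functions from `α` to `α` (a subspace of `{0,1}^(α × α)`) is not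
bisequential; indeed `𝒳 = 𝒳_{ω₁}` embeds homeomorphically into `𝒳_α`. -/
theorem XSpace_ordinal_not_bisequential (α : Ordinal.{0})
    (hα : (Cardinal.aleph 1).ord ≤ α) :
    (∃ e : ↥(XSpace Omega1) → ↥(XSpace ↥(Set.Iio α)), IsEmbedding e) ∧
    ¬ Bisequential ↥(XSpace ↥(Set.Iio α)) := by
  constructor
  · exact ⟨embXO α hα, isEmbedding_embXO α hα⟩
  · intro hb
    exact not_bisequential_XO (bisequential_of_embedding (isEmbedding_embXO α hα) hb)

end
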